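/- For every integer k ≥ 1, the inequality ζ(k+1)·ξ(k) / ((2k)! · √(4k+1)) ≥ 1.15 / (2^(4k) · k) holds, where ζ(k+1) = ((k+1)/2)! · ((k-1)/2)! if k is odd and ζ(k+1) = ((k/2)!)^2 if k is even, and ξ(1) = 1/2, ξ(k) = ((k-1)/2)! · ((k-3)/2)! / 4 if k is odd with k ≥ 3, and ξ(k) = (((k-2)/2)!)^2 / 4 if k is even. -/

import Mathlib

open Real

/-- The factor ζ from the paper: ζ(n) = (n/2)!·((n-2)/2)! for even n and (((n-1)/2)!)² for odd n.
In particular ζ(k+1) = ((k+1)/2)!·((k-1)/2)! for odd k and ((k/2)!)² for even k. -/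
noncomputable def paperZeta (n : ℕ) : ℝ :=
  if Even n then (Nat.factorial (n / 2) : ℝ) * (Nat.factorial ((n - 2) / 2) : ℝ)
  else ((Nat.factorial ((n - 1) / 2) : ℝ)) ^ 2

/-- The factor ξ from the paper. -/
noncomputable def paperXi (k : ℕ) : ℝ :=
  if k = 1 then 1 / 2
  else if Odd k then (Nat.factorial ((k - 1) / 2) : ℝ) * (Nat.factorial ((k - 3) / 2) : ℝ) / 4
  else ((Nat.factorial ((k - 2) / 2) : ℝ)) ^ 2 / 4

namespace Stmt3Aux

lemma step_poly (n : ℕ) :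
    (2*(n+1)+5)*((n+1)+1)^2*((4*(n+1)+4)*((4*(n+1)+3)*((4*(n+1)+2)*(4*(n+1)+1))))^2
      ≤ 65536*((n+1)+1)^8*((2*(n+1)+3)*(n+1)^2) := by
  have h : 65536*((n+1)+1)^8*((2*(n+1)+3)*(n+1)^2)
      = (2*(n+1)+5)*((n+1)+1)^2*((4*(n+1)+4)*((4*(n+1)+3)*((4*(n+1)+2)*(4*(n+1)+1))))^2
        + (114688*n^9 + 1712128*n^8 + 11222528*n^7 + 42296064*n^6 + 100706944*n^5
          + 156450368*n^4 + 157650432*n^3 + 98481664*n^2 + 34107392*n + 4858880) := by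
    ring
  rw [h]
  exact Nat.le_add_right _ _

lemma inv_nat : ∀ m : ℕ, 1 ≤ m →
    1024 * (2*m+3) * m^2 * (Nat.factorial (4*m))^2 ≤ 45 * 2^(16*m) * (Nat.factorial m)^8 := by
  intro m hm
  induction m, hm using Nat.le_induction with
  | base => norm_num [Nat.factorial]
  | succ m hm ih =>
    obtain ⟨n, rfl⟩ : ∃ n, m = n + 1 := ⟨m - 1, by omega⟩
    have h4 : Nat.factorial (4*(n+1+1))
        = (4*(n+1)+4)*((4*(n+1)+3)*((4*(n+1)+2)*((4*(n+1)+1)*Nat.factorial (4*(n+1))))) := by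
      rw [show 4*(n+1+1) = 4*(n+1)+1+1+1+1 by ring]
      rw [Nat.factorial_succ, Nat.factorial_succ, Nat.factorial_succ, Nat.factorial_succ]
    calc 1024 * (2*(n+1+1)+3) * (n+1+1)^2 * (Nat.factorial (4*(n+1+1)))^2
        = ((2*(n+1)+5)*((n+1)+1)^2*((4*(n+1)+4)*((4*(n+1)+3)*((4*(n+1)+2)*(4*(n+1)+1))))^2)
            * (1024*(Nat.factorial (4*(n+1)))^2) := by rw [h4]; ring
      _ ≤ (65536*((n+1)+1)^8*((2*(n+1)+3)*(n+1)^2)) * (1024*(Nat.factorial (4*(n+1)))^2) :=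
          Nat.mul_le_mul (step_poly n) le_rfl
      _ = (65536*((n+1)+1)^8) * (1024*(2*(n+1)+3)*(n+1)^2*(Nat.factorial (4*(n+1)))^2) := by
          ring
      _ ≤ (65536*((n+1)+1)^8) * (45*2^(16*(n+1))*(Nat.factorial (n+1))^8) :=
          Nat.mul_le_mul le_rfl ih
      _ = 45*2^(16*(n+1+1))*(Nat.factorial (n+1+1))^8 := by
          rw [Nat.factorial_succ (n+1)]; ring

lemma even_nat (m : ℕ) (hm : 1 ≤ m) :
    529*(8*m+1)*(Nat.factorial (4*m))^2
      ≤ 100*m^2*(Nat.factorial m)^4*(Nat.factorial (m-1))^4*2^(16*m) := by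
  have inv := inv_nat m hm
  have hf : m * Nat.factorial (m-1) = Nat.factorial m := Nat.mul_factorial_pred (by omega)
  refine Nat.le_of_mul_le_mul_left ?_ (show 0 < 9*m^2 from Nat.mul_pos (by norm_num) (pow_pos hm 2))
  calc 9*m^2*(529*(8*m+1)*(Nat.factorial (4*m))^2)
      = (4761*(8*m+1)) * (m^2*(Nat.factorial (4*m))^2) := by ring
    _ ≤ (20480*(2*m+3)) * (m^2*(Nat.factorial (4*m))^2) :=
        Nat.mul_le_mul (by omega) le_rfl
    _ = 20*(1024*(2*m+3)*m^2*(Nat.factorial (4*m))^2) := by ring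
    _ ≤ 20*(45*2^(16*m)*(Nat.factorial m)^8) := Nat.mul_le_mul le_rfl inv
    _ = 9*m^2*(100*m^2*(Nat.factorial m)^4*(Nat.factorial (m-1))^4*2^(16*m)) := by
        rw [← hf]; ring

lemma odd_nat (m : ℕ) (hm : 1 ≤ m) :
    529*(8*m+5)*(Nat.factorial (4*m+2))^2
      ≤ 25*(2*m+1)^2*(Nat.factorial (m+1))^2*(Nat.factorial m)^4*(Nat.factorial (m-1))^2
          *2^(16*m+8) := by
  have inv := inv_nat m hm
  have hf : m * Nat.factorial (m-1) = Nat.factorial m := Nat.mul_factorial_pred (by omega)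
  have hp : Nat.factorial (m+1) = (m+1) * Nat.factorial m := Nat.factorial_succ m
  have hB : Nat.factorial (4*m+2) = (4*m+2)*((4*m+1)*Nat.factorial (4*m)) := by
    rw [show 4*m+2 = 4*m+1+1 by omega]
    rw [Nat.factorial_succ, Nat.factorial_succ]
  have hpoly : 23805*(8*m+5)*(4*m+1)^2 ≤ 1638400*(2*m+3)*(m+1)^2 := by
    obtain ⟨n, rfl⟩ : ∃ n, m = n + 1 := ⟨m - 1, by omega⟩
    have h : 1638400*(2*(n+1)+3)*((n+1)+1)^2
        = 23805*(8*(n+1)+5)*(4*(n+1)+1)^2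
          + (229760*n^3 + 8730160*n^2 + 28735600*n + 25031375) := by ring
    rw [h]
    exact Nat.le_add_right _ _
  refine Nat.le_of_mul_le_mul_left ?_ (show 0 < 45*m^2 from Nat.mul_pos (by norm_num) (pow_pos hm 2))
  calc 45*m^2*(529*(8*m+5)*(Nat.factorial (4*m+2))^2)
      = (23805*(8*m+5)*(4*m+1)^2) * ((2*m+1)^2*4*(m^2*(Nat.factorial (4*m))^2)) := by
        rw [hB]; ring
    _ ≤ (1638400*(2*m+3)*(m+1)^2) * ((2*m+1)^2*4*(m^2*(Nat.factorial (4*m))^2)) :=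
        Nat.mul_le_mul hpoly le_rfl
    _ = (6400*(m+1)^2*(2*m+1)^2) * (1024*(2*m+3)*m^2*(Nat.factorial (4*m))^2) := by ring
    _ ≤ (6400*(m+1)^2*(2*m+1)^2) * (45*2^(16*m)*(Nat.factorial m)^8) :=
        Nat.mul_le_mul le_rfl inv
    _ = 45*m^2*(25*(2*m+1)^2*(Nat.factorial (m+1))^2*(Nat.factorial m)^4
          *(Nat.factorial (m-1))^2*2^(16*m+8)) := by
        rw [hp, ← hf]; ring

lemma helper (A B P s : ℝ) (hA : 0 < A) (hB : 0 < B) (hP : 0 < P) (hs : 0 < s)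
    (h : 529 * (B^2 * s) ≤ 400 * (A*P)^2) :
    A / (B * Real.sqrt s) ≥ 1.15 / P := by
  have hsq : 0 < Real.sqrt s := Real.sqrt_pos.mpr hs
  rw [ge_iff_le, div_le_div_iff₀ hP (mul_pos hB hsq)]
  have h2 : (1.15*B)^2 * s ≤ (A*P)^2 := by nlinarith [h]
  have h1 : (1.15:ℝ) * (B * Real.sqrt s) = Real.sqrt ((1.15*B)^2 * s) := by
    rw [Real.sqrt_mul (by positivity) s, Real.sqrt_sq (mul_nonneg (by norm_num) hB.le)]
    ring
  rw [h1]
  calc Real.sqrt ((1.15*B)^2*s) ≤ Real.sqrt ((A*P)^2) := Real.sqrt_le_sqrt h2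
    _ = A*P := Real.sqrt_sq (mul_nonneg hA.le hP.le)

end Stmt3Aux

open Stmt3Aux in
theorem stmt_3 (k : ℕ) (hk : 1 ≤ k) :
    paperZeta (k + 1) * paperXi k / ((Nat.factorial (2 * k) : ℝ) * Real.sqrt (4 * (k : ℝ) + 1)) ≥
      1.15 / (2 ^ (4 * k) * (k : ℝ)) := by
  rcases Nat.even_or_odd k with he | ho
  · -- k even, k = 2*m with m ≥ 1
    obtain ⟨m, rfl⟩ : ∃ m, k = 2*m := by obtain ⟨r, hr⟩ := he; exact ⟨r, by omega⟩
    have hm : 1 ≤ m := by omega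
    have he1 : ¬ Even (2*m+1) := by simp only [Nat.even_iff]; omega
    have hz : paperZeta (2*m+1) = (Nat.factorial m : ℝ)^2 := by
      simp only [paperZeta, if_neg he1, show (2*m+1-1)/2 = m by omega]
    have hne : ¬ (2*m = 1) := by omega
    have ho1 : ¬ Odd (2*m) := by simp only [Nat.odd_iff]; omega
    have hx : paperXi (2*m) = ((Nat.factorial (m-1) : ℝ))^2/4 := by
      simp only [paperXi, if_neg hne, if_neg ho1, show (2*m-2)/2 = m-1 by omega]
    rw [hz, hx, show 2*(2*m) = 4*m by ring]
    have f1 : (0:ℝ) < (Nat.factorial m : ℝ) := by exact_mod_cast Nat.factorial_pos m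
    have f2 : (0:ℝ) < (Nat.factorial (m-1) : ℝ) := by exact_mod_cast Nat.factorial_pos (m-1)
    have f3 : (0:ℝ) < (Nat.factorial (4*m) : ℝ) := by exact_mod_cast Nat.factorial_pos (4*m)
    have hc : (0:ℝ) < ((2*m : ℕ):ℝ) := by exact_mod_cast Nat.pos_of_ne_zero (by omega)
    refine helper _ _ _ _ ?_ ?_ ?_ ?_ ?_
    · positivity
    · exact f3
    · exact mul_pos (by positivity) hc
    · positivity
    · calc (529:ℝ) * ((Nat.factorial (4*m) : ℝ)^2 * (4*((2*m:ℕ):ℝ)+1))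
          = ((529*(8*m+1)*(Nat.factorial (4*m))^2 : ℕ) : ℝ) := by push_cast; ring
        _ ≤ ((100*m^2*(Nat.factorial m)^4*(Nat.factorial (m-1))^4*2^(16*m) : ℕ) : ℝ) :=
            Nat.cast_le.mpr (even_nat m hm)
        _ = 400 * (((Nat.factorial m : ℝ)^2 * (((Nat.factorial (m-1) : ℝ))^2/4))
              * (2^(4*(2*m)) * ((2*m:ℕ):ℝ)))^2 := by push_cast; ring
  · -- k odd, k = 2*m+1
    obtain ⟨m, rfl⟩ := ho
    rcases Nat.eq_zero_or_pos m with rfl | hm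
    · -- k = 1
      have hz : paperZeta 2 = 1 := by simp [paperZeta, Nat.factorial]
      have hx : paperXi 1 = 1/2 := by simp [paperXi]
      norm_num
      rw [hz, hx]
      norm_num [Nat.factorial]
      rw [div_le_div_iff₀ (by norm_num) (by positivity)]
      nlinarith [Real.sq_sqrt (show (0:ℝ) ≤ 5 by norm_num), Real.sqrt_nonneg 5,
        sq_nonneg (Real.sqrt 5 - 2.3)]
    · -- k = 2*m+1, m ≥ 1
      have he1 : Even (2*m+1+1) := ⟨m+1, by omega⟩
      have hz : paperZeta (2*m+1+1)
          = (Nat.factorial (m+1) : ℝ) * (Nat.factorial m : ℝ) := by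
        simp only [paperZeta, if_pos he1, show (2*m+1+1)/2 = m+1 by omega,
          show (2*m+1+1-2)/2 = m by omega]
      have hne : ¬ (2*m+1 = 1) := by omega
      have ho1 : Odd (2*m+1) := ⟨m, by omega⟩
      have hx : paperXi (2*m+1)
          = (Nat.factorial m : ℝ) * (Nat.factorial (m-1) : ℝ) / 4 := by
        simp only [paperXi, if_neg hne, if_pos ho1, show (2*m+1-1)/2 = m by omega,
          show (2*m+1-3)/2 = m-1 by omega]
      rw [hz, hx, show 2*(2*m+1) = 4*m+2 by ring]
      have f1 : (0:ℝ) < (Nat.factorial m : ℝ) := by exact_mod_cast Nat.factorial_pos m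
      have f2 : (0:ℝ) < (Nat.factorial (m-1) : ℝ) := by exact_mod_cast Nat.factorial_pos (m-1)
      have f3 : (0:ℝ) < (Nat.factorial (4*m+2) : ℝ) := by exact_mod_cast Nat.factorial_pos (4*m+2)
      have f4 : (0:ℝ) < (Nat.factorial (m+1) : ℝ) := by exact_mod_cast Nat.factorial_pos (m+1)
      have hc : (0:ℝ) < ((2*m+1 : ℕ):ℝ) := by exact_mod_cast Nat.pos_of_ne_zero (by omega)
      refine helper _ _ _ _ ?_ ?_ ?_ ?_ ?_
      · positivity
      · exact f3
      · exact mul_pos (by positivity) hc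
      · positivity
      · calc (529:ℝ) * ((Nat.factorial (4*m+2) : ℝ)^2 * (4*((2*m+1:ℕ):ℝ)+1))
            = ((529*(8*m+5)*(Nat.factorial (4*m+2))^2 : ℕ) : ℝ) := by push_cast; ring
          _ ≤ ((25*(2*m+1)^2*(Nat.factorial (m+1))^2*(Nat.factorial m)^4
                *(Nat.factorial (m-1))^2*2^(16*m+8) : ℕ) : ℝ) :=
              Nat.cast_le.mpr (odd_nat m hm)
          _ = 400 * (((Nat.factorial (m+1) : ℝ) * (Nat.factorial m : ℝ)
                * ((Nat.factorial m : ℝ) * (Nat.factorial (m-1) : ℝ) / 4))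
              * (2^(4*(2*m+1)) * ((2*m+1:ℕ):ℝ)))^2 := by push_cast; ring
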